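/- Let φ: [0,∞) → [0,∞) be continuous, non-decreasing, positive on (0,∞), of at most linear growth, with ∫₀₊ dx/φ(x) = +∞. For γ, ε ≥ 0 let u^{γ,ε} be the unique solution of u(t) = γ + ∫ₜ¹ (φ(u(s)) + ε) ds. Then for each fixed t ∈ [0,1] and ε ≥ 0, the map γ ↦ u^{γ,ε}(t) is continuous, and for fixed γ the map ε ↦ u^{γ,ε}(t) is continuous. -/

import Mathlib

open MeasureTheory Set Filter Topology
open scoped ENNReal NNReal

def IsSolODE (φ : ℝ → ℝ) (ε γ : ℝ) (u : ℝ → ℝ) : Prop :=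
  ContinuousOn u (Set.Icc 0 1) ∧ (∀ t ∈ Set.Icc (0:ℝ) 1, 0 ≤ u t) ∧
    ∀ t ∈ Set.Icc (0:ℝ) 1, u t = γ + ∫ s in Set.Ioc t 1, (φ (u s) + ε)

def OsgoodCondition (φ : ℝ → ℝ) : Prop :=
  ∀ δ > (0:ℝ), ∫⁻ x in Set.Ioc (0:ℝ) δ, ENNReal.ofReal (1 / φ x) = ⊤

section Basic

variable {φ : ℝ → ℝ} {ε γ : ℝ} {w : ℝ → ℝ}

lemma sol_g_contOn (hφc : ContinuousOn φ (Ici 0)) (hw : IsSolODE φ ε γ w) :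
    ContinuousOn (fun s => φ (w s) + ε) (Icc 0 1) :=
  (hφc.comp hw.1 fun s hs => hw.2.1 s hs).add continuousOn_const

lemma sol_g_intble (hφc : ContinuousOn φ (Ici 0)) (hw : IsSolODE φ ε γ w)
    {t₁ t₂ : ℝ} (h₁ : t₁ ∈ Icc (0:ℝ) 1) (h₂ : t₂ ∈ Icc (0:ℝ) 1) :
    IntervalIntegrable (fun s => φ (w s) + ε) volume t₁ t₂ :=
  ((sol_g_contOn hφc hw).mono (uIcc_subset_Icc h₁ h₂)).intervalIntegrable

lemma sol_eq_ii (hw : IsSolODE φ ε γ w) {t : ℝ} (ht : t ∈ Icc (0:ℝ) 1) :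
    w t = γ + ∫ s in t..1, (φ (w s) + ε) := by
  rw [intervalIntegral.integral_of_le ht.2]
  exact hw.2.2 t ht

lemma sol_one (hw : IsSolODE φ ε γ w) : w 1 = γ := by
  have := hw.2.2 1 (by simp)
  simpa using this

lemma sol_diff (hφc : ContinuousOn φ (Ici 0)) (hw : IsSolODE φ ε γ w)
    {t₁ t₂ : ℝ} (h₁ : t₁ ∈ Icc (0:ℝ) 1) (h₂ : t₂ ∈ Icc (0:ℝ) 1) (h12 : t₁ ≤ t₂) :
    w t₁ = w t₂ + ∫ s in t₁..t₂, (φ (w s) + ε) := by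
  have hadd := intervalIntegral.integral_add_adjacent_intervals
    (sol_g_intble hφc hw h₁ h₂) (sol_g_intble hφc hw h₂ (right_mem_Icc.mpr zero_le_one))
  have e1 := sol_eq_ii hw h₁
  have e2 := sol_eq_ii hw h₂
  rw [e1, e2]
  linarith [hadd]

lemma sol_antitone (hφc : ContinuousOn φ (Ici 0)) (hφnn : ∀ x ≥ (0:ℝ), 0 ≤ φ x)
    (hε : 0 ≤ ε) (hw : IsSolODE φ ε γ w)
    {t₁ t₂ : ℝ} (h₁ : t₁ ∈ Icc (0:ℝ) 1) (h₂ : t₂ ∈ Icc (0:ℝ) 1) (h12 : t₁ ≤ t₂) :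
    w t₂ ≤ w t₁ := by
  rw [sol_diff hφc hw h₁ h₂ h12]
  have : 0 ≤ ∫ s in t₁..t₂, (φ (w s) + ε) := by
    apply intervalIntegral.integral_nonneg h12
    intro s hs
    have hs' : s ∈ Icc (0:ℝ) 1 := ⟨le_trans h₁.1 hs.1, le_trans hs.2 h₂.2⟩
    exact add_nonneg (hφnn _ (hw.2.1 s hs')) hε
  linarith

lemma sol_ge (hφc : ContinuousOn φ (Ici 0)) (hφnn : ∀ x ≥ (0:ℝ), 0 ≤ φ x)
    (hε : 0 ≤ ε) (hw : IsSolODE φ ε γ w) {t : ℝ} (ht : t ∈ Icc (0:ℝ) 1) :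
    γ ≤ w t := by
  have := sol_antitone hφc hφnn hε hw ht (by simp : (1:ℝ) ∈ Icc (0:ℝ) 1) ht.2
  rwa [sol_one hw] at this

lemma sol_hasDeriv (hφc : ContinuousOn φ (Ici 0)) (hw : IsSolODE φ ε γ w)
    {t : ℝ} (ht : t ∈ Icc (0:ℝ) 1) :
    HasDerivWithinAt w (-(φ (w t) + ε)) (Icc 0 1) t := by
  haveI : Fact (t ∈ Icc (0:ℝ) 1) := ⟨ht⟩
  set g : ℝ → ℝ := fun s => φ (w s) + ε with hg
  have hF : HasDerivWithinAt (fun r => ∫ x in (1:ℝ)..r, g x) (g t) (Icc 0 1) t := by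
    apply intervalIntegral.integral_hasDerivWithinAt_right
      (sol_g_intble hφc hw (by simp) ht)
      ((sol_g_contOn hφc hw).stronglyMeasurableAtFilter_nhdsWithin measurableSet_Icc t)
      (((sol_g_contOn hφc hw) t ht))
  have heq : ∀ r ∈ Icc (0:ℝ) 1, w r = γ - ∫ x in (1:ℝ)..r, g x := by
    intro r hr
    rw [intervalIntegral.integral_symm, sol_eq_ii hw hr]; ring
  have : HasDerivWithinAt (fun r => γ - ∫ x in (1:ℝ)..r, g x) (-(g t)) (Icc 0 1) t := by
    exact ((hasDerivWithinAt_const t (Icc (0:ℝ) 1) γ).sub hF).congr_deriv (zero_sub _)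
  exact this.congr heq (heq t ht)

end Basic

section Ident

variable {φ : ℝ → ℝ} {ε γ : ℝ} {w : ℝ → ℝ}

lemma sol_ident (hφc : ContinuousOn φ (Ici 0)) (hφm : MonotoneOn φ (Ici 0))
    (hφnn : ∀ x ≥ (0:ℝ), 0 ≤ φ x) (hε : 0 ≤ ε) (hw : IsSolODE φ ε γ w)
    {t₁ t₂ : ℝ} (h₁ : t₁ ∈ Icc (0:ℝ) 1) (h₂ : t₂ ∈ Icc (0:ℝ) 1) (h12 : t₁ ≤ t₂)
    (hpos : 0 < φ (w t₂) + ε) :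
    ∫ z in (w t₂)..(w t₁), (φ z + ε)⁻¹ = t₂ - t₁ := by
  set A := w t₂ with hA
  set B := w t₁ with hB
  have hAB : A ≤ B := sol_antitone hφc hφnn hε hw h₁ h₂ h12
  have hA0 : 0 ≤ A := hw.2.1 t₂ h₂
  have hposIcc : ∀ z ∈ Icc A B, 0 < φ z + ε := by
    intro z hz
    have : φ A ≤ φ z := hφm (mem_Ici.mpr hA0) (mem_Ici.mpr (le_trans hA0 hz.1)) hz.1
    linarith
  have hIccsub : Icc A B ⊆ Ici (0:ℝ) := fun z hz => le_trans hA0 hz.1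
  have hcont : ContinuousOn (fun z => (φ z + ε)⁻¹) (Icc A B) := by
    apply ContinuousOn.inv₀ ((hφc.mono hIccsub).add continuousOn_const)
    exact fun z hz => ne_of_gt (hposIcc z hz)
  have hmaps : MapsTo w (Icc t₁ t₂) (Icc A B) := by
    intro s hs
    have hs01 : s ∈ Icc (0:ℝ) 1 := ⟨le_trans h₁.1 hs.1, le_trans hs.2 h₂.2⟩
    exact ⟨sol_antitone hφc hφnn hε hw hs01 h₂ hs.2,
           sol_antitone hφc hφnn hε hw h₁ hs01 hs.1⟩
  set F : ℝ → ℝ := fun y => ∫ z in A..y, (φ z + ε)⁻¹ with hFdef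
  have hF : ∀ y ∈ Icc A B, HasDerivWithinAt F ((φ y + ε)⁻¹) (Icc A B) y := by
    intro y hy
    haveI : Fact (y ∈ Icc A B) := ⟨hy⟩
    exact intervalIntegral.integral_hasDerivWithinAt_right
      ((hcont.mono (uIcc_subset_Icc (left_mem_Icc.mpr hAB) hy)).intervalIntegrable)
      (hcont.stronglyMeasurableAtFilter_nhdsWithin measurableSet_Icc y)
      (hcont y hy)
  set G : ℝ → ℝ := fun s => F (w s) + s with hGdef
  have hGc : ContinuousOn G (Icc t₁ t₂) := by
    apply ContinuousOn.add _ continuousOn_id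
    have hFc : ContinuousOn F (Icc A B) := fun y hy => (hF y hy).continuousWithinAt
    exact hFc.comp (hw.1.mono (fun s hs => ⟨le_trans h₁.1 hs.1, le_trans hs.2 h₂.2⟩)) hmaps
  have hGd : ∀ s ∈ Ico t₁ t₂, HasDerivWithinAt G 0 (Ici s) s := by
    intro s hs
    have hs01 : s ∈ Icc (0:ℝ) 1 := ⟨le_trans h₁.1 hs.1, le_trans (le_of_lt hs.2) h₂.2⟩
    have hws : w s ∈ Icc A B := hmaps ⟨hs.1, le_of_lt hs.2⟩
    have hwd : HasDerivWithinAt w (-(φ (w s) + ε)) (Icc t₁ t₂) s :=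
      (sol_hasDeriv hφc hw hs01).mono (fun r hr => ⟨le_trans h₁.1 hr.1, le_trans hr.2 h₂.2⟩)
    have hcomp := (hF _ hws).comp s hwd hmaps
    have hx : φ (w s) + ε ≠ 0 := ne_of_gt (hposIcc _ hws)
    have hGD : HasDerivWithinAt G ((φ (w s) + ε)⁻¹ * -(φ (w s) + ε) + 1) (Icc t₁ t₂) s :=
      hcomp.add (hasDerivWithinAt_id s (Icc t₁ t₂))
    have hval : (φ (w s) + ε)⁻¹ * -(φ (w s) + ε) + 1 = 0 := by
      rw [mul_neg, inv_mul_cancel₀ hx]; ring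
    rw [hval] at hGD
    exact hGD.mono_of_mem_nhdsWithin (Icc_mem_nhdsGE_of_mem hs)
  have hconst := constant_of_has_deriv_right_zero hGc hGd t₂ (right_mem_Icc.mpr h12)
  have hFA : F A = 0 := intervalIntegral.integral_same
  have : F A + t₂ = F B + t₁ := hconst
  have : F B = t₂ - t₁ := by rw [hFA] at this; linarith
  exact this

end Ident

section Bound

variable {φ : ℝ → ℝ} {ε γ a b : ℝ} {w : ℝ → ℝ}

lemma gron_aux {δ K ε x : ℝ} (hδ : 0 ≤ δ) (hK : 1 ≤ K) (hε : 0 ≤ ε)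
    (hx0 : 0 ≤ x) (hx1 : x ≤ 1) : gronwallBound δ K ε x ≤ (δ + ε) * Real.exp K := by
  rw [gronwallBound_of_K_ne_0 (by linarith : K ≠ 0)]
  have h1 : Real.exp (K * x) ≤ Real.exp K := Real.exp_le_exp.2 (by nlinarith)
  have h2 : 1 ≤ Real.exp (K * x) := Real.one_le_exp (by positivity)
  have h3 : ε / K ≤ ε := div_le_self hε hK
  have h5 : 0 ≤ ε / K := by positivity
  nlinarith [h1, h2, h3, h5]

lemma sol_bound (hφc : ContinuousOn φ (Ici 0)) (hφnn : ∀ x ≥ (0:ℝ), 0 ≤ φ x)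
    (ha : 0 ≤ a) (hb : 0 ≤ b) (hφgrow : ∀ x ≥ (0:ℝ), φ x ≤ a * x + b)
    (hγ : 0 ≤ γ) (hε : 0 ≤ ε) (hw : IsSolODE φ ε γ w)
    {t : ℝ} (ht : t ∈ Icc (0:ℝ) 1) : w t ≤ (γ + b + ε) * Real.exp (a + 1) := by
  set σ : ℝ → ℝ := fun s => 1 - s with hσ
  have hσmaps : MapsTo σ (Icc (0:ℝ) 1) (Icc (0:ℝ) 1) := by
    intro s hs; constructor <;> simp [hσ] <;> [linarith [hs.2]; linarith [hs.1]]
  set v : ℝ → ℝ := fun s => w (1 - s) with hv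
  have hvc : ContinuousOn v (Icc 0 1) :=
    hw.1.comp ((continuous_const.sub continuous_id).continuousOn) hσmaps
  have hvd : ∀ s ∈ Ico (0:ℝ) 1, HasDerivWithinAt v (φ (w (1 - s)) + ε) (Ici s) s := by
    intro s hs
    have hs01 : s ∈ Icc (0:ℝ) 1 := ⟨hs.1, le_of_lt hs.2⟩
    have hσs : σ s ∈ Icc (0:ℝ) 1 := hσmaps hs01
    have hσd : HasDerivWithinAt σ (-1) (Icc (0:ℝ) 1) s := by
      exact ((hasDerivWithinAt_const s (Icc (0:ℝ) 1) (1:ℝ)).sub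
        (hasDerivWithinAt_id s (Icc (0:ℝ) 1))).congr_deriv (zero_sub _)
    have hcomp := (sol_hasDeriv hφc hw hσs).comp s hσd hσmaps
    have : HasDerivWithinAt v (-(φ (w (1 - s)) + ε) * (-1)) (Icc (0:ℝ) 1) s := hcomp
    have h2 : HasDerivWithinAt v (φ (w (1 - s)) + ε) (Icc (0:ℝ) 1) s := by
      convert this using 1; ring
    exact h2.mono_of_mem_nhdsWithin (Icc_mem_nhdsGE_of_mem ⟨hs.1, (lt_of_lt_of_le hs.2 le_rfl)⟩)
  have hbound : ∀ s ∈ Ico (0:ℝ) 1,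
      ‖φ (w (1 - s)) + ε‖ ≤ (a + 1) * ‖v s‖ + (b + ε) := by
    intro s hs
    have hs01 : (1:ℝ) - s ∈ Icc (0:ℝ) 1 := hσmaps ⟨hs.1, le_of_lt hs.2⟩
    have hwnn : 0 ≤ w (1 - s) := hw.2.1 _ hs01
    have hφle : φ (w (1 - s)) ≤ a * w (1 - s) + b := hφgrow _ hwnn
    have hφnn' : 0 ≤ φ (w (1 - s)) := hφnn _ hwnn
    rw [Real.norm_of_nonneg (by linarith), Real.norm_of_nonneg hwnn]
    nlinarith
  have h0 : ‖v 0‖ ≤ γ := by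
    simp only [hv, sub_zero]
    rw [Real.norm_of_nonneg (hw.2.1 1 (right_mem_Icc.mpr zero_le_one)), sol_one hw]
  have hg := norm_le_gronwallBound_of_norm_deriv_right_le hvc hvd h0 hbound
    (1 - t) ⟨by linarith [ht.2], by linarith [ht.1]⟩
  have hvt : v (1 - t) = w t := by simp [hv]
  rw [hvt, Real.norm_of_nonneg (hw.2.1 t ht), sub_zero] at hg
  calc w t ≤ gronwallBound γ (a + 1) (b + ε) (1 - t) := hg
    _ ≤ (γ + (b + ε)) * Real.exp (a + 1) :=
        gron_aux hγ (by linarith) (by linarith) (by linarith [ht.2]) (by linarith [ht.1])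
    _ = (γ + b + ε) * Real.exp (a + 1) := by ring_nf

end Bound

section IntEst

lemma int_lb {f : ℝ → ℝ} {p q c M m : ℝ} (hf : ContinuousOn f (Icc c M))
    (hp : p ∈ Icc c M) (hq : q ∈ Icc c M) (hm : ∀ z ∈ Icc c M, m ≤ f z) (hm0 : 0 ≤ m) :
    m * |q - p| ≤ |∫ z in p..q, f z| := by
  have key : ∀ p' q' : ℝ, p' ∈ Icc c M → q' ∈ Icc c M → p' ≤ q' →
      m * (q' - p') ≤ ∫ z in p'..q', f z := by
    intro p' q' hp' hq' hpq
    have hsub : Icc p' q' ⊆ Icc c M := Icc_subset_Icc hp'.1 hq'.2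
    have hint : IntervalIntegrable f volume p' q' :=
      (hf.mono ((uIcc_subset_Icc hp' hq'))).intervalIntegrable
    have := intervalIntegral.integral_mono_on hpq intervalIntegrable_const hint
      (fun x hx => hm x (hsub hx))
    rw [mul_comm]
    simpa using this
  rcases le_total p q with h | h
  · have := key p q hp hq h
    have habs : |q - p| = q - p := abs_of_nonneg (by linarith)
    rw [habs]
    exact le_trans this (le_abs_self _)
  · have := key q p hq hp h
    have habs : |q - p| = p - q := by rw [abs_of_nonpos (by linarith : q - p ≤ 0)]; ring
    rw [habs, intervalIntegral.integral_symm, abs_neg]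
    exact le_trans this (le_abs_self _)

end IntEst

section Key

variable {φ : ℝ → ℝ} {a b : ℝ}

/-- Key estimate in the `γ` direction. -/
lemma key_gamma (hφc : ContinuousOn φ (Ici 0)) (hφm : MonotoneOn φ (Ici 0))
    (hφnn : ∀ x ≥ (0:ℝ), 0 ≤ φ x)
    {ε γ₁ γ₂ c M : ℝ} {w₁ w₂ : ℝ → ℝ} (hε : 0 ≤ ε)
    (hc0 : 0 ≤ c) (hcpos : 0 < φ c + ε) (hc₁ : c ≤ γ₁) (hc₂ : c ≤ γ₂)
    (hw₁ : IsSolODE φ ε γ₁ w₁) (hw₂ : IsSolODE φ ε γ₂ w₂)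
    {t : ℝ} (ht : t ∈ Icc (0:ℝ) 1)
    (hM₁ : w₁ t ≤ M) (hM₂ : w₂ t ≤ M) :
    |w₁ t - w₂ t| ≤ (φ M + ε) * ((φ c + ε)⁻¹ * |γ₁ - γ₂|) := by
  set y₁ := w₁ t with hy₁
  set y₂ := w₂ t with hy₂
  have hγ₁ : 0 ≤ γ₁ := le_trans hc0 hc₁
  have hγ₂ : 0 ≤ γ₂ := le_trans hc0 hc₂
  have hgy₁ : γ₁ ≤ y₁ := sol_ge hφc hφnn hε hw₁ ht
  have hgy₂ : γ₂ ≤ y₂ := sol_ge hφc hφnn hε hw₂ ht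
  have hcM : c ≤ M := le_trans hc₁ (le_trans hgy₁ hM₁)
  have hIccsub : Icc c M ⊆ Ici (0:ℝ) := fun z hz => le_trans hc0 hz.1
  have hposIcc : ∀ z ∈ Icc c M, 0 < φ z + ε := by
    intro z hz
    have : φ c ≤ φ z := hφm (mem_Ici.mpr hc0) (hIccsub hz) hz.1
    linarith
  have hub : ∀ z ∈ Icc c M, (φ z + ε)⁻¹ ≤ (φ c + ε)⁻¹ := by
    intro z hz
    have h1 : φ c ≤ φ z := hφm (mem_Ici.mpr hc0) (hIccsub hz) hz.1
    exact inv_anti₀ hcpos (by linarith)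
  have hlb : ∀ z ∈ Icc c M, (φ M + ε)⁻¹ ≤ (φ z + ε)⁻¹ := by
    intro z hz
    have h1 : φ z ≤ φ M := hφm (hIccsub hz) (mem_Ici.mpr (le_trans hc0 hcM)) hz.2
    exact inv_anti₀ (hposIcc z hz) (by linarith)
  have hMpos : 0 < φ M + ε := hposIcc M (right_mem_Icc.mpr hcM)
  have hcont : ContinuousOn (fun z => (φ z + ε)⁻¹) (Icc c M) := by
    apply ContinuousOn.inv₀ ((hφc.mono hIccsub).add continuousOn_const)
    exact fun z hz => ne_of_gt (hposIcc z hz)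
  have hγ₁m : γ₁ ∈ Icc c M := ⟨hc₁, le_trans hgy₁ hM₁⟩
  have hγ₂m : γ₂ ∈ Icc c M := ⟨hc₂, le_trans hgy₂ hM₂⟩
  have hy₁m : y₁ ∈ Icc c M := ⟨le_trans hc₁ hgy₁, hM₁⟩
  have hy₂m : y₂ ∈ Icc c M := ⟨le_trans hc₂ hgy₂, hM₂⟩
  have hii : ∀ p q : ℝ, p ∈ Icc c M → q ∈ Icc c M →
      IntervalIntegrable (fun z => (φ z + ε)⁻¹) volume p q :=
    fun p q hp hq => (hcont.mono (uIcc_subset_Icc hp hq)).intervalIntegrable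
  -- identities
  have hpos₁ : 0 < φ (w₁ 1) + ε := by rw [sol_one hw₁]; exact hposIcc γ₁ hγ₁m
  have hpos₂ : 0 < φ (w₂ 1) + ε := by rw [sol_one hw₂]; exact hposIcc γ₂ hγ₂m
  have I₁ : ∫ z in γ₁..y₁, (φ z + ε)⁻¹ = 1 - t := by
    have := sol_ident hφc hφm hφnn hε hw₁ ht (right_mem_Icc.mpr zero_le_one) ht.2 hpos₁
    rwa [sol_one hw₁] at this
  have I₂ : ∫ z in γ₂..y₂, (φ z + ε)⁻¹ = 1 - t := by
    have := sol_ident hφc hφm hφnn hε hw₂ ht (right_mem_Icc.mpr zero_le_one) ht.2 hpos₂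
    rwa [sol_one hw₂] at this
  -- Chasles
  have hch1 : (∫ z in γ₁..γ₂, (φ z + ε)⁻¹) + ∫ z in γ₂..y₁, (φ z + ε)⁻¹
      = ∫ z in γ₁..y₁, (φ z + ε)⁻¹ :=
    intervalIntegral.integral_add_adjacent_intervals (hii _ _ hγ₁m hγ₂m) (hii _ _ hγ₂m hy₁m)
  have hch2 : (∫ z in γ₂..y₂, (φ z + ε)⁻¹) + ∫ z in y₂..y₁, (φ z + ε)⁻¹
      = ∫ z in γ₂..y₁, (φ z + ε)⁻¹ :=
    intervalIntegral.integral_add_adjacent_intervals (hii _ _ hγ₂m hy₂m) (hii _ _ hy₂m hy₁m)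
  have hmain : ∫ z in y₂..y₁, (φ z + ε)⁻¹ = - ∫ z in γ₁..γ₂, (φ z + ε)⁻¹ := by
    linarith [I₁, I₂, hch1, hch2]
  -- upper bound on RHS
  have hupper : |∫ z in γ₁..γ₂, (φ z + ε)⁻¹| ≤ (φ c + ε)⁻¹ * |γ₂ - γ₁| := by
    rw [← Real.norm_eq_abs]
    apply intervalIntegral.norm_integral_le_of_norm_le_const
    intro x hx
    have hx' : x ∈ Icc c M := (uIcc_subset_Icc hγ₁m hγ₂m) (uIoc_subset_uIcc hx)
    rw [Real.norm_of_nonneg (le_of_lt (inv_pos.mpr (hposIcc x hx')))]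
    exact hub x hx'
  -- lower bound on LHS
  have hlower : (φ M + ε)⁻¹ * |y₁ - y₂| ≤ |∫ z in y₂..y₁, (φ z + ε)⁻¹| :=
    int_lb hcont hy₂m hy₁m hlb (le_of_lt (inv_pos.mpr hMpos))
  rw [hmain, abs_neg] at hlower
  have hcomb : (φ M + ε)⁻¹ * |y₁ - y₂| ≤ (φ c + ε)⁻¹ * |γ₂ - γ₁| :=
    le_trans hlower hupper
  have habs : |γ₂ - γ₁| = |γ₁ - γ₂| := abs_sub_comm _ _
  rw [habs] at hcomb
  calc |y₁ - y₂| = (φ M + ε) * ((φ M + ε)⁻¹ * |y₁ - y₂|) := by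
        field_simp
    _ ≤ (φ M + ε) * ((φ c + ε)⁻¹ * |γ₁ - γ₂|) := by
        exact mul_le_mul_of_nonneg_left hcomb (le_of_lt hMpos)

end Key

section Key2

variable {φ : ℝ → ℝ}

/-- Key estimate in the `ε` direction. -/
lemma key_eps (hφc : ContinuousOn φ (Ici 0)) (hφm : MonotoneOn φ (Ici 0))
    (hφnn : ∀ x ≥ (0:ℝ), 0 ≤ φ x)
    {γ ε₁ ε₂ d M : ℝ} {w₁ w₂ : ℝ → ℝ} (hγ : 0 ≤ γ) (hε₁ : 0 ≤ ε₁) (hε₂ : 0 ≤ ε₂)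
    (hd : 0 < d) (hd₁ : d ≤ φ γ + ε₁) (hd₂ : d ≤ φ γ + ε₂)
    (hw₁ : IsSolODE φ ε₁ γ w₁) (hw₂ : IsSolODE φ ε₂ γ w₂)
    {t : ℝ} (ht : t ∈ Icc (0:ℝ) 1)
    (hM₁ : w₁ t ≤ M) (hM₂ : w₂ t ≤ M) :
    |w₁ t - w₂ t| ≤ (φ M + ε₂) * (M * (|ε₁ - ε₂| / d ^ 2)) := by
  set y₁ := w₁ t with hy₁
  set y₂ := w₂ t with hy₂
  have hgy₁ : γ ≤ y₁ := sol_ge hφc hφnn hε₁ hw₁ ht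
  have hgy₂ : γ ≤ y₂ := sol_ge hφc hφnn hε₂ hw₂ ht
  have hγM : γ ≤ M := le_trans hgy₁ hM₁
  have hIccsub : Icc γ M ⊆ Ici (0:ℝ) := fun z hz => le_trans hγ hz.1
  have hφz : ∀ z ∈ Icc γ M, φ γ ≤ φ z :=
    fun z hz => hφm (mem_Ici.mpr hγ) (hIccsub hz) hz.1
  have hφzM : ∀ z ∈ Icc γ M, φ z ≤ φ M :=
    fun z hz => hφm (hIccsub hz) (mem_Ici.mpr (le_trans hγ hγM)) hz.2
  have hpos₁ : ∀ z ∈ Icc γ M, d ≤ φ z + ε₁ := fun z hz => le_trans hd₁ (by linarith [hφz z hz])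
  have hpos₂ : ∀ z ∈ Icc γ M, d ≤ φ z + ε₂ := fun z hz => le_trans hd₂ (by linarith [hφz z hz])
  have hγm : γ ∈ Icc γ M := left_mem_Icc.mpr hγM
  have hy₁m : y₁ ∈ Icc γ M := ⟨hgy₁, hM₁⟩
  have hy₂m : y₂ ∈ Icc γ M := ⟨hgy₂, hM₂⟩
  have hMpos : 0 < φ M + ε₂ := lt_of_lt_of_le hd (hpos₂ M (right_mem_Icc.mpr hγM))
  have hcont₁ : ContinuousOn (fun z => (φ z + ε₁)⁻¹) (Icc γ M) := by
    apply ContinuousOn.inv₀ ((hφc.mono hIccsub).add continuousOn_const)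
    exact fun z hz => ne_of_gt (lt_of_lt_of_le hd (hpos₁ z hz))
  have hcont₂ : ContinuousOn (fun z => (φ z + ε₂)⁻¹) (Icc γ M) := by
    apply ContinuousOn.inv₀ ((hφc.mono hIccsub).add continuousOn_const)
    exact fun z hz => ne_of_gt (lt_of_lt_of_le hd (hpos₂ z hz))
  have hii₁ : ∀ p q : ℝ, p ∈ Icc γ M → q ∈ Icc γ M →
      IntervalIntegrable (fun z => (φ z + ε₁)⁻¹) volume p q :=
    fun p q hp hq => (hcont₁.mono (uIcc_subset_Icc hp hq)).intervalIntegrable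
  have hii₂ : ∀ p q : ℝ, p ∈ Icc γ M → q ∈ Icc γ M →
      IntervalIntegrable (fun z => (φ z + ε₂)⁻¹) volume p q :=
    fun p q hp hq => (hcont₂.mono (uIcc_subset_Icc hp hq)).intervalIntegrable
  have hI₁ : ∫ z in γ..y₁, (φ z + ε₁)⁻¹ = 1 - t := by
    have hp : 0 < φ (w₁ 1) + ε₁ := by
      rw [sol_one hw₁]; exact lt_of_lt_of_le hd (hpos₁ γ hγm)
    have := sol_ident hφc hφm hφnn hε₁ hw₁ ht (right_mem_Icc.mpr zero_le_one) ht.2 hp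
    rwa [sol_one hw₁] at this
  have hI₂ : ∫ z in γ..y₂, (φ z + ε₂)⁻¹ = 1 - t := by
    have hp : 0 < φ (w₂ 1) + ε₂ := by
      rw [sol_one hw₂]; exact lt_of_lt_of_le hd (hpos₂ γ hγm)
    have := sol_ident hφc hφm hφnn hε₂ hw₂ ht (right_mem_Icc.mpr zero_le_one) ht.2 hp
    rwa [sol_one hw₂] at this
  have hch : (∫ z in γ..y₂, (φ z + ε₂)⁻¹) + ∫ z in y₂..y₁, (φ z + ε₂)⁻¹
      = ∫ z in γ..y₁, (φ z + ε₂)⁻¹ :=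
    intervalIntegral.integral_add_adjacent_intervals (hii₂ _ _ hγm hy₂m) (hii₂ _ _ hy₂m hy₁m)
  have hsub : ∫ z in γ..y₁, ((φ z + ε₂)⁻¹ - (φ z + ε₁)⁻¹)
      = (∫ z in γ..y₁, (φ z + ε₂)⁻¹) - ∫ z in γ..y₁, (φ z + ε₁)⁻¹ :=
    intervalIntegral.integral_sub (hii₂ _ _ hγm hy₁m) (hii₁ _ _ hγm hy₁m)
  have hmain : ∫ z in y₂..y₁, (φ z + ε₂)⁻¹
      = ∫ z in γ..y₁, ((φ z + ε₂)⁻¹ - (φ z + ε₁)⁻¹) := by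
    rw [hsub]; linarith [hI₁, hI₂, hch]
  have hptw : ∀ z ∈ Icc γ M, |(φ z + ε₂)⁻¹ - (φ z + ε₁)⁻¹| ≤ |ε₁ - ε₂| / d ^ 2 := by
    intro z hz
    have h₁ : (0:ℝ) < φ z + ε₁ := lt_of_lt_of_le hd (hpos₁ z hz)
    have h₂ : (0:ℝ) < φ z + ε₂ := lt_of_lt_of_le hd (hpos₂ z hz)
    have heq : (φ z + ε₂)⁻¹ - (φ z + ε₁)⁻¹
        = (ε₁ - ε₂) / ((φ z + ε₂) * (φ z + ε₁)) := by
      rw [inv_sub_inv (ne_of_gt h₂) (ne_of_gt h₁)]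
      ring_nf
    rw [heq, abs_div, abs_of_pos (mul_pos h₂ h₁)]
    apply div_le_div_of_nonneg_left ?_ ?_ ?_ |>.trans_eq rfl
    · exact abs_nonneg _
    · positivity
    · calc d ^ 2 = d * d := sq d
        _ ≤ (φ z + ε₂) * (φ z + ε₁) :=
          mul_le_mul (hpos₂ z hz) (hpos₁ z hz) (le_of_lt hd) (by linarith)
  have hupper : |∫ z in γ..y₁, ((φ z + ε₂)⁻¹ - (φ z + ε₁)⁻¹)|
      ≤ (|ε₁ - ε₂| / d ^ 2) * |y₁ - γ| := by
    rw [← Real.norm_eq_abs]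
    apply intervalIntegral.norm_integral_le_of_norm_le_const
    intro x hx
    have hx' : x ∈ Icc γ M := (uIcc_subset_Icc hγm hy₁m) (uIoc_subset_uIcc hx)
    rw [Real.norm_eq_abs]
    exact hptw x hx'
  have hlb : ∀ z ∈ Icc γ M, (φ M + ε₂)⁻¹ ≤ (φ z + ε₂)⁻¹ := by
    intro z hz
    exact inv_anti₀ (lt_of_lt_of_le hd (hpos₂ z hz)) (by linarith [hφzM z hz])
  have hlower : (φ M + ε₂)⁻¹ * |y₁ - y₂| ≤ |∫ z in y₂..y₁, (φ z + ε₂)⁻¹| :=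
    int_lb hcont₂ hy₂m hy₁m hlb (le_of_lt (inv_pos.mpr hMpos))
  rw [hmain] at hlower
  have hyγ : |y₁ - γ| ≤ M := by
    rw [abs_of_nonneg (by linarith)]; linarith
  have hcomb : (φ M + ε₂)⁻¹ * |y₁ - y₂| ≤ (|ε₁ - ε₂| / d ^ 2) * M := by
    refine le_trans (le_trans hlower hupper) ?_
    exact mul_le_mul_of_nonneg_left hyγ (by positivity)
  calc |y₁ - y₂| = (φ M + ε₂) * ((φ M + ε₂)⁻¹ * |y₁ - y₂|) := by field_simp
    _ ≤ (φ M + ε₂) * ((|ε₁ - ε₂| / d ^ 2) * M) :=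
        mul_le_mul_of_nonneg_left hcomb (le_of_lt hMpos)
    _ = (φ M + ε₂) * (M * (|ε₁ - ε₂| / d ^ 2)) := by ring

end Key2

section Osgood

variable {φ : ℝ → ℝ}

lemma lint_real (hφc : ContinuousOn φ (Ici 0)) (hφpos : ∀ x > (0:ℝ), 0 < φ x)
    {δ c : ℝ} (hδ : 0 < δ) (hδc : δ ≤ c) :
    ∫⁻ x in Ioc δ c, ENNReal.ofReal (1 / φ x) = ENNReal.ofReal (∫ z in δ..c, (φ z)⁻¹) := by
  have hsub : Icc δ c ⊆ Ici (0:ℝ) := fun z hz => le_trans (le_of_lt hδ) hz.1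
  have hcont : ContinuousOn (fun z => (φ z)⁻¹) (Icc δ c) := by
    apply ContinuousOn.inv₀ (hφc.mono hsub)
    exact fun z hz => ne_of_gt (hφpos z (lt_of_lt_of_le hδ hz.1))
  have hint : IntegrableOn (fun z => (φ z)⁻¹) (Ioc δ c) volume :=
    (hcont.integrableOn_Icc).mono_set Ioc_subset_Icc_self
  have hnn : 0 ≤ᵐ[volume.restrict (Ioc δ c)] fun z => (φ z)⁻¹ :=
    (ae_restrict_iff' measurableSet_Ioc).2 (ae_of_all _ fun z hz =>
      le_of_lt (inv_pos.mpr (hφpos z (lt_trans hδ hz.1))))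
  rw [intervalIntegral.integral_of_le hδc,
    MeasureTheory.ofReal_integral_eq_lintegral_ofReal hint hnn]
  apply lintegral_congr_ae
  filter_upwards with x
  rw [one_div]

lemma osgood_sup (hφc : ContinuousOn φ (Ici 0)) (hφpos : ∀ x > (0:ℝ), 0 < φ x)
    (hOsg : OsgoodCondition φ) {c : ℝ} (hc : 0 < c) :
    (⨆ n : ℕ, ∫⁻ x in Ioc (c / (n + 2)) c, ENNReal.ofReal (1 / φ x)) = ⊤ := by
  set f : ℝ → ℝ≥0∞ := fun x => ENNReal.ofReal (1 / φ x) with hfdef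
  set μ := volume.restrict (Ioc (0:ℝ) c) with hμ
  set δ : ℕ → ℝ := fun n => c / (↑n + 2) with hδdef
  have hδpos : ∀ n, 0 < δ n := fun n => by positivity
  have haem : AEMeasurable f μ := by
    have h1 : ContinuousOn (fun x => 1 / φ x) (Ioc 0 c) := by
      apply ContinuousOn.div continuousOn_const (hφc.mono (fun z hz => le_of_lt hz.1))
      exact fun z hz => ne_of_gt (hφpos z hz.1)
    exact ENNReal.measurable_ofReal.comp_aemeasurable (h1.aemeasurable measurableSet_Ioc)
  set fn : ℕ → ℝ → ℝ≥0∞ := fun n => (Ioc (δ n) c).indicator f with hfn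
  have hfnm : ∀ n, AEMeasurable (fn n) μ := fun n => haem.indicator measurableSet_Ioc
  have hmono : ∀ x : ℝ, Monotone fun n => fn n x := by
    intro x m n hmn
    apply Set.indicator_le_indicator_of_subset _ (fun a => zero_le)
    apply Ioc_subset_Ioc_left
    apply div_le_div_of_nonneg_left (le_of_lt hc) (by positivity)
    have : (m:ℝ) ≤ n := Nat.cast_le.mpr hmn
    linarith
  have hsup : ∀ x ∈ Ioc (0:ℝ) c, (⨆ n, fn n x) = f x := by
    intro x hx
    apply le_antisymm
    · exact iSup_le fun n => Set.indicator_le_self _ _ x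
    · obtain ⟨n, hn⟩ := exists_nat_gt (c / x)
      have hx0 : 0 < x := hx.1
      have hlt : δ n < x := by
        rw [hδdef]
        rw [div_lt_iff₀ (by positivity)]
        have h2 : c < x * n := by rwa [div_lt_iff₀ hx0, mul_comm] at hn
        nlinarith
      have : fn n x = f x := Set.indicator_of_mem (show x ∈ Ioc (δ n) c from ⟨hlt, hx.2⟩) f
      rw [← this]
      exact le_iSup (fun n => fn n x) n
  have step1 : ∫⁻ x, f x ∂μ = ⨆ n, ∫⁻ x, fn n x ∂μ := by
    rw [← lintegral_iSup' hfnm (ae_of_all _ hmono)]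
    apply lintegral_congr_ae
    rw [hμ]
    exact (ae_restrict_iff' measurableSet_Ioc).2 (ae_of_all _ fun x hx => (hsup x hx).symm)
  have step2 : ∀ n, ∫⁻ x, fn n x ∂μ = ∫⁻ x in Ioc (δ n) c, f x := by
    intro n
    show ∫⁻ x, (Ioc (δ n) c).indicator f x ∂μ = _
    rw [lintegral_indicator measurableSet_Ioc f, hμ,
      Measure.restrict_restrict measurableSet_Ioc,
      inter_eq_left.mpr (Ioc_subset_Ioc_left (le_of_lt (hδpos n)))]
  have hOs := hOsg c hc
  calc (⨆ n : ℕ, ∫⁻ x in Ioc (c / (↑n + 2)) c, ENNReal.ofReal (1 / φ x))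
      = ⨆ n, ∫⁻ x, fn n x ∂μ := by
        apply iSup_congr
        intro n
        rw [step2 n]
    _ = ∫⁻ x, f x ∂μ := step1.symm
    _ = ⊤ := hOs

end Osgood

section OsgoodCor

variable {φ : ℝ → ℝ}

lemma osgood_not_allsmall (hφc : ContinuousOn φ (Ici 0)) (hφpos : ∀ x > (0:ℝ), 0 < φ x)
    (hOsg : OsgoodCondition φ) {c : ℝ} (hc : 0 < c)
    (hsmall : ∀ δ' ∈ Ioo (0:ℝ) c, ∫ z in δ'..c, (φ z)⁻¹ ≤ 1) : False := by
  have hsup := osgood_sup hφc hφpos hOsg hc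
  have hle : ∀ n : ℕ, ∫⁻ x in Ioc (c/(↑n+2)) c, ENNReal.ofReal (1/φ x) ≤ ENNReal.ofReal 1 := by
    intro n
    have hδ : (0:ℝ) < c/(↑n+2) := by positivity
    have hlt : c/(↑n+2) < c := by
      apply div_lt_self hc
      have : (0:ℝ) ≤ n := Nat.cast_nonneg n
      linarith
    rw [lint_real hφc hφpos hδ (le_of_lt hlt)]
    exact ENNReal.ofReal_le_ofReal (hsmall _ ⟨hδ, hlt⟩)
  have := iSup_le hle
  rw [hsup] at this
  exact absurd this (by simp [ENNReal.ofReal_lt_top.ne])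

lemma osgood_big (hφc : ContinuousOn φ (Ici 0)) (hφpos : ∀ x > (0:ℝ), 0 < φ x)
    (hOsg : OsgoodCondition φ) {c : ℝ} (hc : 0 < c) :
    ∃ δ' ∈ Ioo (0:ℝ) c, 3 ≤ ∫ z in δ'..c, (φ z)⁻¹ := by
  have hsup := osgood_sup hφc hφpos hOsg hc
  have h3 : ENNReal.ofReal 3 < ⨆ n : ℕ, ∫⁻ x in Ioc (c/(↑n+2)) c, ENNReal.ofReal (1/φ x) := by
    rw [hsup]; exact ENNReal.ofReal_lt_top
  rw [lt_iSup_iff] at h3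
  obtain ⟨n, hn⟩ := h3
  have hδ : (0:ℝ) < c/(↑n+2) := by positivity
  have hlt : c/(↑n+2) < c := by
    apply div_lt_self hc
    have : (0:ℝ) ≤ n := Nat.cast_nonneg n
    linarith
  rw [lint_real hφc hφpos hδ (le_of_lt hlt)] at hn
  refine ⟨c/(↑n+2), ⟨hδ, hlt⟩, ?_⟩
  have := (ENNReal.ofReal_lt_ofReal_iff_of_nonneg (by norm_num)).1 hn
  linarith

lemma sol_zero (hφc : ContinuousOn φ (Ici 0)) (hφm : MonotoneOn φ (Ici 0))
    (hφnn : ∀ x ≥ (0:ℝ), 0 ≤ φ x) (hφpos : ∀ x > (0:ℝ), 0 < φ x)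
    (hOsg : OsgoodCondition φ) {w : ℝ → ℝ} (hw : IsSolODE φ 0 0 w) :
    ∀ t ∈ Icc (0:ℝ) 1, w t = 0 := by
  intro t₀ ht₀
  by_contra hne
  have hc : 0 < w t₀ := lt_of_le_of_ne (hw.2.1 t₀ ht₀) (Ne.symm hne)
  have hw1 : w 1 = 0 := by
    have := sol_one hw; simpa using this
  have hwc : ContinuousOn w (Icc t₀ 1) := hw.1.mono (Icc_subset_Icc ht₀.1 le_rfl)
  have hsmall : ∀ δ' ∈ Ioo (0:ℝ) (w t₀), ∫ z in δ'..(w t₀), (φ z)⁻¹ ≤ 1 := by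
    intro δ' hδ'
    have hmem : δ' ∈ Icc (w 1) (w t₀) := by
      rw [hw1]; exact ⟨le_of_lt hδ'.1, le_of_lt hδ'.2⟩
    obtain ⟨t', ht'mem, ht'⟩ := intermediate_value_Icc' ht₀.2 hwc hmem
    have ht'01 : t' ∈ Icc (0:ℝ) 1 := ⟨le_trans ht₀.1 ht'mem.1, ht'mem.2⟩
    have hpos : 0 < φ (w t') + 0 := by rw [ht', add_zero]; exact hφpos δ' hδ'.1
    have hident := sol_ident hφc hφm hφnn le_rfl hw ht₀ ht'01 ht'mem.1 hpos
    rw [ht'] at hident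
    have heq : ∫ z in δ'..(w t₀), (φ z)⁻¹ = t' - t₀ := by
      rw [← hident]
      apply intervalIntegral.integral_congr
      intro z _
      simp
    rw [heq]
    linarith [ht'mem.2, ht₀.1]
  exact osgood_not_allsmall hφc hφpos hOsg hc hsmall

end OsgoodCor

section Middle

lemma int_middle {f : ℝ → ℝ} {p q r s K : ℝ} (hf : ContinuousOn f (Icc p s))
    (hfnn : ∀ z ∈ Icc p s, 0 ≤ f z) (h1 : p ≤ q) (h2 : q ≤ r) (h3 : r ≤ s)
    (hK : K ≤ ∫ z in q..r, f z) : K ≤ ∫ z in p..s, f z := by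
  have hii : ∀ x y : ℝ, x ∈ Icc p s → y ∈ Icc p s → IntervalIntegrable f volume x y :=
    fun x y hx hy => (hf.mono (uIcc_subset_Icc hx hy)).intervalIntegrable
  have hpm : p ∈ Icc p s := left_mem_Icc.mpr (by linarith)
  have hqm : q ∈ Icc p s := ⟨h1, by linarith⟩
  have hrm : r ∈ Icc p s := ⟨by linarith, h3⟩
  have hsm : s ∈ Icc p s := right_mem_Icc.mpr (by linarith)
  have hc1 : (∫ z in p..q, f z) + ∫ z in q..r, f z = ∫ z in p..r, f z :=
    intervalIntegral.integral_add_adjacent_intervals (hii _ _ hpm hqm) (hii _ _ hqm hrm)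
  have hc2 : (∫ z in p..r, f z) + ∫ z in r..s, f z = ∫ z in p..s, f z :=
    intervalIntegral.integral_add_adjacent_intervals (hii _ _ hpm hrm) (hii _ _ hrm hsm)
  have hnn1 : 0 ≤ ∫ z in p..q, f z :=
    intervalIntegral.integral_nonneg h1 (fun x hx => hfnn x ⟨hx.1, le_trans hx.2 hqm.2⟩)
  have hnn2 : 0 ≤ ∫ z in r..s, f z :=
    intervalIntegral.integral_nonneg h3 (fun x hx => hfnn x ⟨le_trans hrm.1 hx.1, hx.2⟩)
  linarith

end Middle

theorem stmt2 (φ : ℝ → ℝ) (a b : ℝ) (ha : 0 ≤ a) (hb : 0 ≤ b)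
    (hφc : ContinuousOn φ (Set.Ici 0)) (hφm : MonotoneOn φ (Set.Ici 0))
    (hφnn : ∀ x ≥ (0:ℝ), 0 ≤ φ x) (hφpos : ∀ x > (0:ℝ), 0 < φ x)
    (hφgrow : ∀ x ≥ (0:ℝ), φ x ≤ a * x + b) (hφOsg : OsgoodCondition φ)
    (u : ℝ → ℝ → ℝ → ℝ) (hu : ∀ γ ≥ (0:ℝ), ∀ ε ≥ (0:ℝ), IsSolODE φ ε γ (u γ ε))
    (t : ℝ) (ht : t ∈ Set.Icc (0:ℝ) 1) :
    (∀ ε ≥ (0:ℝ), ContinuousOn (fun γ => u γ ε t) (Set.Ici 0)) ∧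
    (∀ γ ≥ (0:ℝ), ContinuousOn (fun ε => u γ ε t) (Set.Ici 0)) := by
  constructor
  · -- continuity in γ
    intro ε hε γ₀ hγ₀
    by_cases hzero : ε = 0 ∧ γ₀ = 0
    · -- Osgood case
      obtain ⟨hε0, hγ₀0⟩ := hzero
      subst hε0; subst hγ₀0
      rw [Metric.continuousWithinAt_iff]
      intro η hη
      have hη' : 0 < η/2 := by linarith
      obtain ⟨δO, hδO, hbig⟩ := osgood_big hφc hφpos hφOsg hη'
      refine ⟨δO, hδO.1, ?_⟩
      intro γ hγmem hdist
      have hu00 : u 0 0 t = 0 := sol_zero hφc hφm hφnn hφpos hφOsg (hu 0 le_rfl 0 le_rfl) t ht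
      rw [Real.dist_eq, sub_zero] at hdist
      rw [Real.dist_eq, hu00, sub_zero]
      have hγ0 : (0:ℝ) ≤ γ := hγmem
      rcases eq_or_lt_of_le hγ0 with heq | hpos
      · rw [← heq, hu00]
        simpa using hη
      · have hsol := hu γ hγ0 0 le_rfl
        have hy : γ ≤ u γ 0 t := sol_ge hφc hφnn le_rfl hsol ht
        rw [abs_of_nonneg (by linarith : (0:ℝ) ≤ u γ 0 t)]
        by_contra hcon
        push_neg at hcon
        -- identity
        have hp1 : 0 < φ (u γ 0 1) + 0 := by
          rw [sol_one hsol, add_zero]; exact hφpos γ hpos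
        have hident := sol_ident hφc hφm hφnn le_rfl hsol ht
          (right_mem_Icc.mpr zero_le_one) ht.2 hp1
        rw [sol_one hsol] at hident
        have hident' : ∫ z in γ..(u γ 0 t), (φ z)⁻¹ = 1 - t := by
          rw [← hident]
          apply intervalIntegral.integral_congr
          intro z _; simp
        -- lower bound
        have hγδ : γ < δO := by rwa [abs_of_nonneg hγ0] at hdist
        have hcontf : ContinuousOn (fun z => (φ z)⁻¹) (Icc γ (u γ 0 t)) := by
          apply ContinuousOn.inv₀ (hφc.mono (fun z hz => le_trans (le_of_lt hpos) hz.1))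
          exact fun z hz => ne_of_gt (hφpos z (lt_of_lt_of_le hpos hz.1))
        have hfnn : ∀ z ∈ Icc γ (u γ 0 t), 0 ≤ (φ z)⁻¹ :=
          fun z hz => le_of_lt (inv_pos.mpr (hφpos z (lt_of_lt_of_le hpos hz.1)))
        have hmid := int_middle hcontf hfnn (le_of_lt hγδ) (le_of_lt hδO.2)
          (by linarith : η/2 ≤ u γ 0 t) hbig
        rw [hident'] at hmid
        linarith [ht.1]
    · -- Lipschitz case
      have hexc : ∃ c : ℝ, 0 ≤ c ∧ c ≤ γ₀ ∧ 0 < φ c + ε ∧ Icc c (γ₀+1) ∈ 𝓝[Ici 0] γ₀ := by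
        rcases eq_or_lt_of_le hε with hε0 | hεpos
        · have hγne : γ₀ ≠ 0 := by
            intro h; exact hzero ⟨hε0.symm, h⟩
          have hγpos : 0 < γ₀ := lt_of_le_of_ne hγ₀ (Ne.symm hγne)
          refine ⟨γ₀/2, by positivity, by linarith, ?_, ?_⟩
          · have := hφpos (γ₀/2) (by positivity); linarith
          · exact mem_nhdsWithin_of_mem_nhds (Icc_mem_nhds (by linarith) (by linarith))
        · refine ⟨0, le_rfl, hγ₀, by linarith [hφnn 0 le_rfl], ?_⟩
          rw [← Ici_inter_Iic]
          exact inter_mem_nhdsWithin _ (Iic_mem_nhds (by linarith))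
      obtain ⟨c, hc0, hcγ, hcpos, hmemnb⟩ := hexc
      set M := (γ₀ + 1 + b + ε) * Real.exp (a+1) with hM
      have hMnn : 0 ≤ M := mul_nonneg (by linarith) (le_of_lt (Real.exp_pos _))
      set L := (φ M + ε) * (φ c + ε)⁻¹ with hL
      have hφMnn : 0 ≤ φ M := hφnn M hMnn
      have hL0 : 0 ≤ L := mul_nonneg (by linarith) (le_of_lt (inv_pos.mpr hcpos))
      have key : ∀ γ ∈ Icc c (γ₀+1), |u γ ε t - u γ₀ ε t| ≤ L * |γ - γ₀| := by
        intro γ hγmem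
        have hγ0 : 0 ≤ γ := le_trans hc0 hγmem.1
        have hsol := hu γ hγ0 ε hε
        have hsol₀ := hu γ₀ hγ₀ ε hε
        have hb₁ : u γ ε t ≤ M := by
          refine le_trans (sol_bound hφc hφnn ha hb hφgrow hγ0 hε hsol ht) ?_
          exact mul_le_mul_of_nonneg_right (by linarith [hγmem.2]) (le_of_lt (Real.exp_pos _))
        have hb₂ : u γ₀ ε t ≤ M := by
          refine le_trans (sol_bound hφc hφnn ha hb hφgrow hγ₀ hε hsol₀ ht) ?_
          exact mul_le_mul_of_nonneg_right (by linarith) (le_of_lt (Real.exp_pos _))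
        have := key_gamma hφc hφm hφnn hε hc0 hcpos hγmem.1 hcγ hsol hsol₀ ht hb₁ hb₂
        calc |u γ ε t - u γ₀ ε t| ≤ (φ M + ε) * ((φ c + ε)⁻¹ * |γ - γ₀|) := this
          _ = L * |γ - γ₀| := by rw [hL]; ring
      have hCW : ContinuousWithinAt (fun γ => u γ ε t) (Icc c (γ₀+1)) γ₀ := by
        rw [Metric.continuousWithinAt_iff]
        intro η hη
        refine ⟨η/(L+1), by positivity, ?_⟩
        intro γ hγmem hdist
        rw [Real.dist_eq] at hdist ⊢
        have hkey := key γ hγmem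
        have h1 : L * |γ - γ₀| ≤ L * (η/(L+1)) :=
          mul_le_mul_of_nonneg_left (le_of_lt hdist) hL0
        have h2 : L * (η/(L+1)) < η := by
          rw [mul_div_assoc']
          rw [div_lt_iff₀ (by linarith : (0:ℝ) < L + 1)]
          nlinarith
        linarith
      exact hCW.mono_of_mem_nhdsWithin hmemnb
  · -- continuity in ε
    intro γ hγ ε₀ hε₀
    by_cases hcase : 0 < γ ∨ 0 < ε₀
    · -- Lipschitz cases
      have hexc : ∃ d lo : ℝ, 0 < d ∧ 0 ≤ lo ∧ lo ≤ ε₀ ∧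
          (∀ ε' ≥ lo, d ≤ φ γ + ε') ∧ Icc lo (ε₀+1) ∈ 𝓝[Ici 0] ε₀ := by
        rcases hcase with hγp | hεp
        · refine ⟨φ γ, 0, hφpos γ hγp, le_rfl, hε₀, fun ε' hε' => by linarith, ?_⟩
          rw [← Ici_inter_Iic]
          exact inter_mem_nhdsWithin _ (Iic_mem_nhds (by linarith))
        · refine ⟨ε₀/2, ε₀/2, by linarith, by linarith, by linarith,
            fun ε' hε' => by linarith [hφnn γ hγ], ?_⟩
          exact mem_nhdsWithin_of_mem_nhds (Icc_mem_nhds (by linarith) (by linarith))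
      obtain ⟨d, lo, hd, hlo0, hloε, hdlo, hnb⟩ := hexc
      set M := (γ + b + ε₀ + 1) * Real.exp (a+1) with hM
      have hMnn : 0 ≤ M := mul_nonneg (by linarith) (le_of_lt (Real.exp_pos _))
      have hφMnn : 0 ≤ φ M := hφnn M hMnn
      set L := (φ M + ε₀) * M / d^2 with hL
      have hL0 : 0 ≤ L :=
        div_nonneg (mul_nonneg (by linarith) hMnn) (by positivity)
      have key : ∀ ε' ∈ Icc lo (ε₀+1), |u γ ε' t - u γ ε₀ t| ≤ L * |ε' - ε₀| := by
        intro ε' hε'mem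
        have hε'0 : 0 ≤ ε' := le_trans hlo0 hε'mem.1
        have hsol := hu γ hγ ε' hε'0
        have hsol₀ := hu γ hγ ε₀ hε₀
        have hb₁ : u γ ε' t ≤ M := by
          refine le_trans (sol_bound hφc hφnn ha hb hφgrow hγ hε'0 hsol ht) ?_
          exact mul_le_mul_of_nonneg_right (by linarith [hε'mem.2]) (le_of_lt (Real.exp_pos _))
        have hb₂ : u γ ε₀ t ≤ M := by
          refine le_trans (sol_bound hφc hφnn ha hb hφgrow hγ hε₀ hsol₀ ht) ?_
          exact mul_le_mul_of_nonneg_right (by linarith) (le_of_lt (Real.exp_pos _))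
        have := key_eps hφc hφm hφnn hγ hε'0 hε₀ hd (hdlo ε' hε'mem.1) (hdlo ε₀ hloε)
          hsol hsol₀ ht hb₁ hb₂
        calc |u γ ε' t - u γ ε₀ t| ≤ (φ M + ε₀) * (M * (|ε' - ε₀| / d ^ 2)) := this
          _ = L * |ε' - ε₀| := by rw [hL]; ring
      have hCW : ContinuousWithinAt (fun ε' => u γ ε' t) (Icc lo (ε₀+1)) ε₀ := by
        rw [Metric.continuousWithinAt_iff]
        intro η hη
        refine ⟨η/(L+1), by positivity, ?_⟩
        intro ε' hε'mem hdist
        rw [Real.dist_eq] at hdist ⊢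
        have hkey := key ε' hε'mem
        have h1 : L * |ε' - ε₀| ≤ L * (η/(L+1)) :=
          mul_le_mul_of_nonneg_left (le_of_lt hdist) hL0
        have h2 : L * (η/(L+1)) < η := by
          rw [mul_div_assoc']
          rw [div_lt_iff₀ (by linarith : (0:ℝ) < L + 1)]
          nlinarith
        linarith
      exact hCW.mono_of_mem_nhdsWithin hnb
    · -- Osgood case : γ = 0, ε₀ = 0
      push_neg at hcase
      have hγ0 : γ = 0 := le_antisymm hcase.1 hγ
      have hε₀0 : ε₀ = 0 := le_antisymm hcase.2 hε₀
      subst hγ0; subst hε₀0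
      rw [Metric.continuousWithinAt_iff]
      intro η hη
      have hη' : 0 < η/2 := by linarith
      obtain ⟨δO, hδO, hbig⟩ := osgood_big hφc hφpos hφOsg hη'
      have hφδO : 0 < φ δO := hφpos δO hδO.1
      refine ⟨φ δO, hφδO, ?_⟩
      intro ε' hε'mem hdist
      have hu00 : u 0 0 t = 0 := sol_zero hφc hφm hφnn hφpos hφOsg (hu 0 le_rfl 0 le_rfl) t ht
      rw [Real.dist_eq, sub_zero] at hdist
      rw [Real.dist_eq, hu00, sub_zero]
      have hε'0 : (0:ℝ) ≤ ε' := hε'mem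
      rcases eq_or_lt_of_le hε'0 with heq | hpos
      · rw [← heq, hu00]
        simpa using hη
      · have hsol := hu 0 le_rfl ε' hε'0
        have hy : 0 ≤ u 0 ε' t := hsol.2.1 t ht
        rw [abs_of_nonneg hy]
        by_contra hcon
        push_neg at hcon
        have hεφ : ε' ≤ φ δO := by
          rw [abs_of_nonneg hε'0] at hdist; linarith
        -- identity
        have hp1 : 0 < φ (u 0 ε' 1) + ε' := by
          rw [sol_one hsol]
          linarith [hφnn 0 le_rfl]
        have hident := sol_ident hφc hφm hφnn hε'0 hsol ht
          (right_mem_Icc.mpr zero_le_one) ht.2 hp1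
        rw [sol_one hsol] at hident
        -- middle estimate
        have hptw : ∀ z ∈ Icc δO (η/2), 2⁻¹ * (φ z)⁻¹ ≤ (φ z + ε')⁻¹ := by
          intro z hz
          have hφz : 0 < φ z := hφpos z (lt_of_lt_of_le hδO.1 hz.1)
          have hφδz : φ δO ≤ φ z :=
            hφm (mem_Ici.mpr (le_of_lt hδO.1)) (mem_Ici.mpr (le_trans (le_of_lt hδO.1) hz.1)) hz.1
          have h2 : φ z + ε' ≤ 2 * φ z := by linarith
          have h3 : (2 * φ z)⁻¹ ≤ (φ z + ε')⁻¹ :=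
            inv_anti₀ (by linarith) h2
          rw [mul_inv] at h3
          exact h3
        have hcont1 : ContinuousOn (fun z => 2⁻¹ * (φ z)⁻¹) (Icc δO (η/2)) := by
          apply ContinuousOn.mul continuousOn_const
          apply ContinuousOn.inv₀ (hφc.mono (fun z hz => le_trans (le_of_lt hδO.1) hz.1))
          exact fun z hz => ne_of_gt (hφpos z (lt_of_lt_of_le hδO.1 hz.1))
        have hcont2 : ContinuousOn (fun z => (φ z + ε')⁻¹) (Icc δO (η/2)) := by
          apply ContinuousOn.inv₀
            ((hφc.mono (fun z hz => le_trans (le_of_lt hδO.1) hz.1)).add continuousOn_const)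
          intro z hz
          have := hφpos z (lt_of_lt_of_le hδO.1 hz.1)
          exact ne_of_gt (by simp only [Pi.add_apply]; linarith)
        have hmono2 : (∫ z in δO..(η/2), 2⁻¹ * (φ z)⁻¹)
            ≤ ∫ z in δO..(η/2), (φ z + ε')⁻¹ := by
          apply intervalIntegral.integral_mono_on (le_of_lt hδO.2)
            ((hcont1.mono (uIcc_subset_Icc (left_mem_Icc.mpr (le_of_lt hδO.2))
              (right_mem_Icc.mpr (le_of_lt hδO.2)))).intervalIntegrable)
            ((hcont2.mono (uIcc_subset_Icc (left_mem_Icc.mpr (le_of_lt hδO.2))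
              (right_mem_Icc.mpr (le_of_lt hδO.2)))).intervalIntegrable)
            hptw
        have hconst : (∫ z in δO..(η/2), 2⁻¹ * (φ z)⁻¹)
            = 2⁻¹ * ∫ z in δO..(η/2), (φ z)⁻¹ :=
          intervalIntegral.integral_const_mul _ _
        have hmid : (3:ℝ)/2 ≤ ∫ z in δO..(η/2), (φ z + ε')⁻¹ := by
          rw [hconst] at hmono2
          linarith
        -- global
        have hcontf : ContinuousOn (fun z => (φ z + ε')⁻¹) (Icc 0 (u 0 ε' t)) := by
          apply ContinuousOn.inv₀ ((hφc.mono (fun z hz => hz.1)).add continuousOn_const)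
          intro z hz
          have := hφnn z hz.1
          exact ne_of_gt (by simp only [Pi.add_apply]; linarith)
        have hfnn : ∀ z ∈ Icc (0:ℝ) (u 0 ε' t), 0 ≤ (φ z + ε')⁻¹ := by
          intro z hz
          have := hφnn z hz.1
          exact le_of_lt (inv_pos.mpr (by linarith))
        have hglob := int_middle hcontf hfnn (le_of_lt hδO.1) (le_of_lt hδO.2)
          (by linarith : η/2 ≤ u 0 ε' t) hmid
        rw [hident] at hglob
        linarith [ht.1]
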